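/- Let θ ∈ (0, 1/2), y ∈ C([0,1], [0,∞)), α ≥ 0, βᵢ ≥ 0 with 0 < η₁ < ... < ηₙ < 1 and k := 1 − (α + Σᵢ βᵢ) > 0. Then the function u(t) = ∫₀¹ H(t,s) y(s) ds is nonnegative on [0,1] and satisfies min_{t ∈ [θ, 1−θ]} u(t) ≥ θ³(1−2θ) · sup_{t ∈ [0,1]} u(t). -/
import Mathlib

open Set intervalIntegral Filter

noncomputable def G (t s : ℝ) : ℝ :=
  if s ≤ t then (t^3*(1-s)^2 - (t-s)^3)/6 else t^3*(1-s)^2/6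

noncomputable def e (s : ℝ) : ℝ := s*(1-s)^2/6

noncomputable def H (α k : ℝ) {n : ℕ} (β η : Fin n → ℝ) (t s : ℝ) : ℝ :=
  G t s + (α/k) * (∫ τ in (0:ℝ)..1, G τ s) + (1/k) * ∑ i, β i * G (η i) s

lemma G_eq (t s : ℝ) : G t s = (t^3*(1-s)^2 - (max (t-s) 0)^3)/6 := by
  unfold G
  split_ifs with h
  · rw [max_eq_left (by linarith)]
  · rw [max_eq_right (by linarith)]; ring

lemma G_cont : Continuous (fun p : ℝ × ℝ => G p.1 p.2) := by
  simp only [G_eq]; fun_prop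

lemma G_ge (t s : ℝ) (ht : t ∈ Set.Icc (0:ℝ) 1) (hs : s ∈ Set.Icc (0:ℝ) 1) :
    t^3 * e s ≤ G t s := by
  obtain ⟨ht0, ht1⟩ := ht; obtain ⟨hs0, hs1⟩ := hs
  unfold G e
  split_ifs with h
  · nlinarith [pow_le_pow_left₀ (by linarith : (0:ℝ) ≤ t - s) (by nlinarith : t - s ≤ t*(1-s)) 3, pow_nonneg (by linarith : (0:ℝ) ≤ t-s) 3]
  · nlinarith [mul_nonneg (pow_nonneg ht0 3) (pow_nonneg (by linarith : (0:ℝ) ≤ 1-s) 3)]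

lemma G_le (t s : ℝ) (ht : t ∈ Set.Icc (0:ℝ) 1) (hs : s ∈ Set.Icc (0:ℝ) 1) :
    G t s ≤ e s := by
  obtain ⟨ht0, ht1⟩ := ht; obtain ⟨hs0, hs1⟩ := hs
  unfold G e
  split_ifs with h
  · nlinarith [mul_nonneg (mul_nonneg hs0 (sq_nonneg (1-t))) (show (0:ℝ) ≤ (2-s)*t+1-2*s by nlinarith)]
  · have h1 : t^3 ≤ t := by nlinarith [mul_nonneg ht0 ht0, mul_nonneg (mul_nonneg ht0 ht0) (by linarith : (0:ℝ) ≤ 1 - t)]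
    nlinarith [mul_nonneg (by linarith : (0:ℝ) ≤ s - t^3) (sq_nonneg (1-s))]

lemma e_nn (s : ℝ) (hs : s ∈ Set.Icc (0:ℝ) 1) : 0 ≤ e s := by
  unfold e; obtain ⟨hs0, hs1⟩ := hs; positivity

lemma G_nn (t s : ℝ) (ht : t ∈ Set.Icc (0:ℝ) 1) (hs : s ∈ Set.Icc (0:ℝ) 1) :
    0 ≤ G t s :=
  le_trans (mul_nonneg (pow_nonneg ht.1 3) (e_nn s hs)) (G_ge t s ht hs)

lemma J_cont : Continuous (fun s : ℝ => ∫ τ in (0:ℝ)..1, G τ s) :=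
  intervalIntegral.continuous_parametric_intervalIntegral_of_continuous'
    (f := fun s τ => G τ s) (G_cont.comp continuous_swap) 0 1

lemma J_nn (s : ℝ) (hs : s ∈ Set.Icc (0:ℝ) 1) :
    0 ≤ ∫ τ in (0:ℝ)..1, G τ s :=
  intervalIntegral.integral_nonneg (by norm_num) (fun τ hτ => G_nn τ s hτ hs)

theorem stmt9 (θ : ℝ) (hθ : θ ∈ Set.Ioo (0:ℝ) (1/2))
    (n : ℕ) (α : ℝ) (β η : Fin n → ℝ)
    (hα : 0 ≤ α) (hβ : ∀ i, 0 ≤ β i)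
    (hηmono : StrictMono η) (hη : ∀ i, η i ∈ Set.Ioo (0:ℝ) 1)
    (k : ℝ) (hk : k = 1 - (α + ∑ i, β i)) (hk0 : 0 < k)
    (y : ℝ → ℝ) (hy : ContinuousOn y (Set.Icc 0 1))
    (hynn : ∀ t ∈ Set.Icc (0:ℝ) 1, 0 ≤ y t)
    (u : ℝ → ℝ) (hu : ∀ t, u t = ∫ s in (0:ℝ)..1, H α k β η t s * y s) :
    (∀ t ∈ Set.Icc (0:ℝ) 1, 0 ≤ u t) ∧
    (∀ t ∈ Set.Icc θ (1-θ),
      θ^3 * (1-2*θ) * sSup (u '' Set.Icc (0:ℝ) 1) ≤ u t) := by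
  obtain ⟨hθ0, hθ2⟩ := hθ
  set γ : ℝ := θ^3 * (1-2*θ) with hγdef
  have hγ0 : 0 < γ := by apply mul_pos (by positivity); linarith
  have hθ31 : θ^3 ≤ 1 := pow_le_one₀ hθ0.le (by linarith)
  have hγ1 : γ ≤ 1 := by nlinarith [pow_nonneg hθ0.le 3]
  -- C s : the t-independent part of H
  have hCnn : ∀ s ∈ Set.Icc (0:ℝ) 1,
      0 ≤ (α/k) * (∫ τ in (0:ℝ)..1, G τ s) + (1/k) * ∑ i, β i * G (η i) s := by
    intro s hs
    have h1 : 0 ≤ (α/k) * (∫ τ in (0:ℝ)..1, G τ s) :=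
      mul_nonneg (div_nonneg hα hk0.le) (J_nn s hs)
    have h2 : 0 ≤ ∑ i, β i * G (η i) s := by
      apply Finset.sum_nonneg
      intro i _
      exact mul_nonneg (hβ i) (G_nn _ s ⟨(hη i).1.le, (hη i).2.le⟩ hs)
    have := mul_nonneg (by positivity : (0:ℝ) ≤ 1/k) h2
    linarith
  have hHnn : ∀ t ∈ Set.Icc (0:ℝ) 1, ∀ s ∈ Set.Icc (0:ℝ) 1, 0 ≤ H α k β η t s := by
    intro t ht s hs
    have := hCnn s hs
    have := G_nn t s ht hs
    unfold H; linarith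
  -- key pointwise inequality
  have key : ∀ t ∈ Set.Icc θ (1-θ), ∀ t' ∈ Set.Icc (0:ℝ) 1, ∀ s ∈ Set.Icc (0:ℝ) 1,
      γ * H α k β η t' s ≤ H α k β η t s := by
    intro t ht t' ht' s hs
    have htI : t ∈ Set.Icc (0:ℝ) 1 := ⟨le_trans hθ0.le ht.1, le_trans ht.2 (by linarith)⟩
    have hGle : G t' s ≤ e s := G_le t' s ht' hs
    have hGge : θ^3 * e s ≤ G t s := by
      refine le_trans ?_ (G_ge t s htI hs)
      apply mul_le_mul_of_nonneg_right _ (e_nn s hs)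
      exact pow_le_pow_left₀ hθ0.le ht.1 3
    have he := e_nn s hs
    have hC := hCnn s hs
    have h1 : γ * G t' s ≤ θ^3 * e s := by
      have h0 : γ * G t' s ≤ γ * e s := mul_le_mul_of_nonneg_left hGle hγ0.le
      nlinarith [mul_nonneg (mul_nonneg hθ0.le (pow_nonneg hθ0.le 3)) he, hγdef]
    have h2 : γ * ((α/k) * (∫ τ in (0:ℝ)..1, G τ s) + (1/k) * ∑ i, β i * G (η i) s)
        ≤ (α/k) * (∫ τ in (0:ℝ)..1, G τ s) + (1/k) * ∑ i, β i * G (η i) s := by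
      nlinarith
    unfold H; unfold H at h2; linarith
  -- integrability
  have hint : ∀ t ∈ Set.Icc (0:ℝ) 1,
      IntervalIntegrable (fun s => H α k β η t s * y s) MeasureTheory.volume 0 1 := by
    intro t ht
    apply ContinuousOn.intervalIntegrable
    rw [Set.uIcc_of_le (by norm_num : (0:ℝ) ≤ 1)]
    apply ContinuousOn.mul _ hy
    apply Continuous.continuousOn
    unfold H
    refine Continuous.add (Continuous.add ?_ ?_) ?_
    · exact G_cont.comp (Continuous.prodMk_right t)
    · exact continuous_const.mul J_cont
    · apply continuous_const.mul
      apply continuous_finset_sum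
      intro i _
      exact continuous_const.mul (G_cont.comp (Continuous.prodMk_right (η i)))
  have part1 : ∀ t ∈ Set.Icc (0:ℝ) 1, 0 ≤ u t := by
    intro t ht
    rw [hu]
    apply intervalIntegral.integral_nonneg (by norm_num)
    intro s hs
    exact mul_nonneg (hHnn t ht s hs) (hynn s hs)
  refine ⟨part1, ?_⟩
  intro t ht
  have htI : t ∈ Set.Icc (0:ℝ) 1 := ⟨le_trans hθ0.le ht.1, le_trans ht.2 (by linarith)⟩
  have hsup : sSup (u '' Set.Icc (0:ℝ) 1) ≤ u t / γ := by
    apply csSup_le (Set.Nonempty.image u ⟨0, by norm_num⟩)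
    rintro _ ⟨t', ht', rfl⟩
    rw [le_div_iff₀ hγ0, mul_comm]
    calc γ * u t' = ∫ s in (0:ℝ)..1, γ * (H α k β η t' s * y s) := by
          rw [hu, intervalIntegral.integral_const_mul]
      _ ≤ ∫ s in (0:ℝ)..1, H α k β η t s * y s := by
          apply intervalIntegral.integral_mono_on (by norm_num)
            ((hint t' ht').const_mul γ) (hint t htI)
          intro s hs
          rw [← mul_assoc]
          exact mul_le_mul_of_nonneg_right (key t ht t' ht' s hs) (hynn s hs)
      _ = u t := (hu t).symm
  calc θ^3 * (1-2*θ) * sSup (u '' Set.Icc (0:ℝ) 1) = γ * sSup (u '' Set.Icc (0:ℝ) 1) := rfl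
    _ ≤ γ * (u t / γ) := mul_le_mul_of_nonneg_left hsup hγ0.le
    _ = u t := by field_simp
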